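/- Let G, H be d×d positive definite matrices, g, h ∈ R^d, and define the lifted (d+1)×(d+1) matrices 𝐆 = [[G+gg^T, g],[g^T, 1]] and 𝐇 = [[H+hh^T, h],[h^T, 1]]. Then tr(𝐇^{-1}𝐆) = tr(H^{-1}G) + ‖g−h‖²_{H^{-1}} + 1, where ‖v‖²_{H^{-1}} = v^T H^{-1} v. -/

import Mathlib

open Matrix

lemma trace_fromBlocks' {n m : Type*} [Fintype n] [Fintype m] [DecidableEq n] [DecidableEq m]
    (A : Matrix n n ℝ) (B : Matrix n m ℝ) (C : Matrix m n ℝ) (D : Matrix m m ℝ) :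
    (fromBlocks A B C D).trace = A.trace + D.trace := by
  simp [Matrix.trace, Fintype.sum_sum_type]

lemma trace_mul_vecMulVec' {n : Type*} [Fintype n] [DecidableEq n]
    (M : Matrix n n ℝ) (v w : n → ℝ) :
    (M * vecMulVec v w).trace = w ⬝ᵥ (M *ᵥ v) := by
  simp only [Matrix.trace, Matrix.diag, Matrix.mul_apply, vecMulVec_apply, dotProduct,
    Matrix.mulVec, dotProduct]
  refine Finset.sum_congr rfl fun i _ => ?_
  rw [Finset.mul_sum]
  exact Finset.sum_congr rfl fun j _ => by ring

lemma mul_vecMulVec' {n : Type*} [Fintype n] (M : Matrix n n ℝ) (a b : n → ℝ) :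
    M * vecMulVec a b = vecMulVec (M *ᵥ a) b := by
  ext i j
  simp only [Matrix.mul_apply, vecMulVec_apply, Matrix.mulVec, dotProduct, Finset.sum_mul]
  exact Finset.sum_congr rfl fun k _ => by ring

lemma vecMul_vecMulVec' {n : Type*} [Fintype n] (a b c : n → ℝ) :
    a ᵥ* vecMulVec b c = (a ⬝ᵥ b) • c := by
  ext j
  simp only [Matrix.vecMul, dotProduct, vecMulVec_apply, Pi.smul_apply, smul_eq_mul,
    Finset.sum_mul]
  exact Finset.sum_congr rfl fun k _ => by ring

theorem lifted_trace_identity {d : ℕ} (G H : Matrix (Fin d) (Fin d) ℝ)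
    (g h : Fin d → ℝ) (hG : G.PosDef) (hH : H.PosDef) :
    ((fromBlocks (H + vecMulVec h h) (replicateCol (Fin 1) h) (replicateRow (Fin 1) h) 1)⁻¹ *
      (fromBlocks (G + vecMulVec g g) (replicateCol (Fin 1) g) (replicateRow (Fin 1) g) 1)).trace
    = (H⁻¹ * G).trace + (g - h) ⬝ᵥ (H⁻¹ *ᵥ (g - h)) + 1 := by
  have hdet : IsUnit H.det := hH.det_pos.ne'.isUnit
  have hHs : Hᵀ = H := hH.1
  have hHis : (H⁻¹)ᵀ = H⁻¹ := by rw [Matrix.transpose_nonsing_inv, hHs]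
  have hHiH : H⁻¹ * H = 1 := Matrix.nonsing_inv_mul H hdet
  set v : Fin d → ℝ := H⁻¹ *ᵥ h with hv
  set c : ℝ := h ⬝ᵥ v with hc
  have hvm : h ᵥ* H⁻¹ = v := by rw [hv, ← hHis, Matrix.vecMul_transpose, hHis]
  set B : Matrix (Fin d ⊕ Fin 1) (Fin d ⊕ Fin 1) ℝ :=
    fromBlocks H⁻¹ (replicateCol (Fin 1) (-v)) (replicateRow (Fin 1) (-v))
      ((1 : Matrix (Fin 1) (Fin 1) ℝ) + Matrix.of fun _ _ => c) with hB
  have hvh : v ⬝ᵥ h = c := dotProduct_comm v h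
  have e11 : H⁻¹ * (H + vecMulVec h h) + replicateCol (Fin 1) (-v) * replicateRow (Fin 1) h = 1 := by
    rw [mul_add, hHiH, mul_vecMulVec', ← hv]
    erw [← vecMulVec_eq (ι := Fin 1)]
    have : vecMulVec (-v) h = -vecMulVec v h := by
      ext i j; simp [vecMulVec_apply]
    rw [this]
    exact add_neg_cancel_right 1 _
  have e12 : H⁻¹ * replicateCol (Fin 1) h + replicateCol (Fin 1) (-v) * (1 : Matrix (Fin 1) (Fin 1) ℝ) = 0 := by
    rw [← replicateCol_mulVec, ← hv, Matrix.mul_one]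
    ext i j; simp
  have e21 : replicateRow (Fin 1) (-v) * (H + vecMulVec h h)
      + ((1 : Matrix (Fin 1) (Fin 1) ℝ) + Matrix.of fun _ _ => c) * replicateRow (Fin 1) h = 0 := by
    have t1 : replicateRow (Fin 1) (-v) * (H + vecMulVec h h) = replicateRow (Fin 1) (-(h + c • h)) := by
      rw [← replicateRow_vecMul]
      congr 1
      rw [Matrix.neg_vecMul, Matrix.vecMul_add, vecMul_vecMulVec', hvh, ← hvm,
        Matrix.vecMul_vecMul, hHiH, Matrix.vecMul_one]
    have t2 : ((1 : Matrix (Fin 1) (Fin 1) ℝ) + Matrix.of fun _ _ => c) * replicateRow (Fin 1) h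
        = replicateRow (Fin 1) (h + c • h) := by
      ext i j
      simp [Matrix.mul_apply, Matrix.one_apply, Fin.eq_zero i]
      ring
    rw [t1, t2]
    ext i j
    simp only [Matrix.add_apply, Matrix.replicateRow_apply, Pi.neg_apply, Pi.add_apply, Pi.smul_apply,
      smul_eq_mul, Matrix.zero_apply]
    ring
  have e22 : replicateRow (Fin 1) (-v) * replicateCol (Fin 1) h
      + ((1 : Matrix (Fin 1) (Fin 1) ℝ) + Matrix.of fun _ _ => c) * 1 = 1 := by
    rw [replicateRow_mul_replicateCol, Matrix.mul_one]
    ext i j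
    simp [Matrix.one_apply, Fin.eq_zero i, Fin.eq_zero j, ← hvh]
  have key : B * fromBlocks (H + vecMulVec h h) (replicateCol (Fin 1) h) (replicateRow (Fin 1) h) 1 = 1 := by
    rw [hB, fromBlocks_multiply, e11, e12, e21, e22, fromBlocks_one]
  have hinv : (fromBlocks (H + vecMulVec h h) (replicateCol (Fin 1) h) (replicateRow (Fin 1) h)
      (1 : Matrix (Fin 1) (Fin 1) ℝ))⁻¹ = B := Matrix.inv_eq_left_inv key
  rw [hinv, hB, fromBlocks_multiply, trace_fromBlocks', mul_add]
  simp only [Matrix.trace_add]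
  rw [trace_mul_vecMulVec']
  erw [trace_replicateCol_mul_replicateRow (ι := Fin 1)]
  rw [Matrix.mul_one]
  have h22a : (replicateRow (Fin 1) (-v) * replicateCol (Fin 1) g).trace = (-v) ⬝ᵥ g := by
    rw [replicateRow_mul_replicateCol]
    simp [Matrix.trace, Matrix.diag]
  have h22b : ((1 : Matrix (Fin 1) (Fin 1) ℝ) + Matrix.of fun _ _ => c).trace = 1 + c := by
    simp [Matrix.trace, Matrix.diag, Matrix.one_apply]
  rw [h22a, h22b]
  have hsym : ∀ a b : Fin d → ℝ, a ⬝ᵥ (H⁻¹ *ᵥ b) = b ⬝ᵥ (H⁻¹ *ᵥ a) := by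
    intro a b
    rw [dotProduct_mulVec, dotProduct_comm, ← hHis, Matrix.vecMul_transpose, hHis]
  have expand : (g - h) ⬝ᵥ (H⁻¹ *ᵥ (g - h))
      = g ⬝ᵥ (H⁻¹ *ᵥ g) - g ⬝ᵥ (H⁻¹ *ᵥ h) - h ⬝ᵥ (H⁻¹ *ᵥ g) + h ⬝ᵥ (H⁻¹ *ᵥ h) := by
    simp only [Matrix.mulVec_sub, dotProduct_sub, sub_dotProduct]
    ring
  rw [expand, hc, hv]
  have h3 : (-(H⁻¹ *ᵥ h)) ⬝ᵥ g = -(g ⬝ᵥ (H⁻¹ *ᵥ h)) := by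
    rw [neg_dotProduct, dotProduct_comm]
  have h4 : h ⬝ᵥ (H⁻¹ *ᵥ g) = g ⬝ᵥ (H⁻¹ *ᵥ h) := hsym h g
  rw [h3, h4]
  ring
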